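/- Let Q be a self-adjoint Markov operator on L^2(S, π) (so its spectrum is contained in [−1,1]) and f ∈ L^2(π) with E_π f = 0. Let ρ_f denote the spectral measure of f with respect to Q, and S_n = Σ_{i=1}^n f(ξ_i) for the associated stationary chain. Then the following are equivalent: (a) the sequence Σ_{k=1}^n E_π(f Q^k f) is bounded; (b) sup_n E S_n^2 / n < ∞; (c) ∫_{[−1,1]} (1−t)^{−1} dρ_f(t) < ∞. -/

import Mathlib

open Finset Filter MeasureTheory
open scoped ENNReal Topology

lemma kv_Icc_to_range {M : Type*} [AddCommMonoid M] (F : ℕ → M) (n : ℕ) :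
    ∑ i ∈ Icc 1 n, ∑ j ∈ Icc 1 n, F ((i : ℤ) - (j : ℤ)).natAbs
      = ∑ i ∈ range n, ∑ j ∈ range n, F ((i : ℤ) - (j : ℤ)).natAbs := by
  rw [← Finset.Ico_add_one_right_eq_Icc, Finset.sum_Ico_eq_sum_range]
  simp only [Nat.add_sub_cancel, Nat.succ_sub_one]
  refine Finset.sum_congr rfl fun i _ => ?_
  rw [Finset.sum_Ico_eq_sum_range]
  simp only [Nat.add_sub_cancel, Nat.succ_sub_one]
  refine Finset.sum_congr rfl fun j _ => ?_
  congr 1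
  omega

lemma kv_diag_sum {M : Type*} [AddCommMonoid M] (F : ℕ → M) (n : ℕ) :
    ∑ i ∈ range n, F ((i : ℤ) - (n : ℤ)).natAbs = ∑ k ∈ Icc 1 n, F k := by
  rw [← Finset.Ico_add_one_right_eq_Icc, Finset.sum_Ico_eq_sum_range]
  simp only [Nat.add_sub_cancel, Nat.succ_sub_one]
  rw [← Finset.sum_range_reflect (fun i => F (1 + i)) n]
  refine Finset.sum_congr rfl fun i hi => ?_
  simp only [Finset.mem_range] at hi
  congr 1
  omega

lemma kv_double_succ (F : ℕ → ℝ) (n : ℕ) :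
    ∑ i ∈ range (n+1), ∑ j ∈ range (n+1), F ((i : ℤ) - (j : ℤ)).natAbs
      = (∑ i ∈ range n, ∑ j ∈ range n, F ((i : ℤ) - (j : ℤ)).natAbs)
        + 2 * (∑ k ∈ Icc 1 n, F k) + F 0 := by
  rw [Finset.sum_range_succ]
  have h1 : ∀ i ∈ range n, ∑ j ∈ range (n+1), F ((i : ℤ) - (j : ℤ)).natAbs
      = (∑ j ∈ range n, F ((i : ℤ) - (j : ℤ)).natAbs) + F ((i : ℤ) - (n : ℤ)).natAbs :=
    fun i _ => Finset.sum_range_succ _ n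
  rw [Finset.sum_congr rfl h1, Finset.sum_add_distrib, Finset.sum_range_succ]
  have h2 : ∑ j ∈ range n, F ((n : ℤ) - (j : ℤ)).natAbs
      = ∑ j ∈ range n, F ((j : ℤ) - (n : ℤ)).natAbs := by
    refine Finset.sum_congr rfl fun j _ => ?_
    congr 1
    omega
  rw [h2, kv_diag_sum]
  have : ((n : ℤ) - (n : ℤ)).natAbs = 0 := by omega
  rw [this]
  ring

lemma kv_closed (F : ℕ → ℝ) (n : ℕ) :
    ∑ i ∈ range n, ∑ j ∈ range n, F ((i : ℤ) - (j : ℤ)).natAbs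
      = n * F 0 + 2 * ∑ m ∈ range n, ∑ k ∈ Icc 1 m, F k := by
  induction n with
  | zero => simp
  | succ n ih =>
    rw [kv_double_succ, ih, Finset.sum_range_succ]
    push_cast
    ring

lemma kv_Icc_geom (n : ℕ) (t : ℝ) :
    ∑ k ∈ Icc 1 n, t ^ k = t * ∑ k ∈ range n, t ^ k := by
  rw [← Finset.Ico_add_one_right_eq_Icc, Finset.sum_Ico_eq_sum_range, Finset.mul_sum]
  simp only [Nat.add_sub_cancel]
  refine Finset.sum_congr rfl fun k _ => ?_
  rw [add_comm, pow_succ']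

lemma kv_K_eq (n : ℕ) (t : ℝ) :
    ∑ i ∈ range n, ∑ j ∈ range n, t ^ ((i : ℤ) - (j : ℤ)).natAbs
      = (∑ k ∈ range n, t ^ k) ^ 2
        + (1 - t ^ 2) * ∑ m ∈ range n, (∑ k ∈ range m, t ^ k) ^ 2 := by
  induction n with
  | zero => simp
  | succ n ih =>
    rw [kv_double_succ (fun k => t ^ k), ih, kv_Icc_geom, geom_sum_succ,
      Finset.sum_range_succ]
    ring

lemma kv_u_sq (m : ℕ) {t : ℝ} (ht : t ∈ Set.Icc (-1:ℝ) 1) :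
    ((1 - t) * ∑ k ∈ range m, t ^ k) ^ 2 ≤ 4 := by
  have h1 : (∑ k ∈ range m, t ^ k) * (t - 1) = t ^ m - 1 := geom_sum_mul t m
  have h2 : (1 - t) * ∑ k ∈ range m, t ^ k = 1 - t ^ m := by nlinarith [h1]
  rw [h2]
  have h3 : |t ^ m| ≤ 1 := by
    rw [abs_pow]; exact pow_le_one₀ (abs_nonneg t) (abs_le.mpr ⟨ht.1, ht.2⟩)
  have := abs_le.mp h3
  nlinarith

lemma kv_K_nonneg (n : ℕ) {t : ℝ} (ht : t ∈ Set.Icc (-1:ℝ) 1) :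
    0 ≤ ∑ i ∈ range n, ∑ j ∈ range n, t ^ ((i : ℤ) - (j : ℤ)).natAbs := by
  rw [kv_K_eq]
  have h1 : (0:ℝ) ≤ 1 - t ^ 2 := by nlinarith [ht.1, ht.2]
  have h2 : (0:ℝ) ≤ ∑ m ∈ range n, (∑ k ∈ range m, t ^ k) ^ 2 :=
    Finset.sum_nonneg fun m _ => sq_nonneg _
  nlinarith [sq_nonneg (∑ k ∈ range n, t ^ k)]

lemma kv_K_trivial (n : ℕ) {t : ℝ} (ht : t ∈ Set.Icc (-1:ℝ) 1) :
    ∑ i ∈ range n, ∑ j ∈ range n, t ^ ((i : ℤ) - (j : ℤ)).natAbs ≤ (n : ℝ) * n := by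
  have h : ∀ k : ℕ, t ^ k ≤ 1 := fun k =>
    le_trans (le_abs_self _) (by rw [abs_pow]; exact pow_le_one₀ (abs_nonneg t) (abs_le.mpr ⟨ht.1, ht.2⟩))
  calc ∑ i ∈ range n, ∑ j ∈ range n, t ^ ((i : ℤ) - (j : ℤ)).natAbs
      ≤ ∑ i ∈ range n, ∑ j ∈ range n, (1:ℝ) :=
        Finset.sum_le_sum fun i _ => Finset.sum_le_sum fun j _ => h _
    _ = (n : ℝ) * n := by simp [mul_comm]

lemma kv_K_mul_le (n : ℕ) {t : ℝ} (ht : t ∈ Set.Icc (-1:ℝ) 1) :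
    (1 - t) * ∑ i ∈ range n, ∑ j ∈ range n, t ^ ((i : ℤ) - (j : ℤ)).natAbs
      ≤ 12 * n := by
  have h1t : (0:ℝ) ≤ 1 - t := by linarith [ht.2]
  have hKnn := kv_K_nonneg n ht
  rcases le_or_gt ((n : ℝ) * (1 - t)) 1 with hc | hc
  · have := kv_K_trivial n ht
    have hn0 : (0:ℝ) ≤ (n:ℝ) := Nat.cast_nonneg n
    nlinarith
  · -- 1 < n(1-t), in particular 0 < 1 - t
    have h1t' : (0:ℝ) < 1 - t := by
      rcases h1t.lt_or_eq with h | h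
      · exact h
      · exfalso; rw [← h] at hc; simp at hc; linarith
    have hsum : ∑ m ∈ range n, ((1 - t) * ∑ k ∈ range m, t ^ k) ^ 2 ≤ (n : ℝ) * 4 := by
      calc ∑ m ∈ range n, ((1 - t) * ∑ k ∈ range m, t ^ k) ^ 2
          ≤ ∑ m ∈ range n, (4:ℝ) := Finset.sum_le_sum fun m _ => kv_u_sq m ht
        _ = (n : ℝ) * 4 := by simp [mul_comm]
    have hun := kv_u_sq n ht
    -- (1-t)^2 * K = u_n^2 + (1-t^2) * sum((1-t) s_m)^2 / ... careful
    have hKeq := kv_K_eq n t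
    -- multiply identity by (1-t)^2
    have key : (1 - t)^2 * (∑ i ∈ range n, ∑ j ∈ range n, t ^ ((i : ℤ) - (j : ℤ)).natAbs)
        = ((1-t) * ∑ k ∈ range n, t ^ k) ^ 2
          + (1 - t^2) * ∑ m ∈ range n, ((1-t) * ∑ k ∈ range m, t ^ k) ^ 2 := by
      have hS : ∑ m ∈ range n, ((1-t) * ∑ k ∈ range m, t ^ k) ^ 2
          = (1-t)^2 * ∑ m ∈ range n, (∑ k ∈ range m, t ^ k) ^ 2 := by
        rw [Finset.mul_sum]
        exact Finset.sum_congr rfl fun m _ => by ring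
      rw [hKeq, hS]
      ring
    have h1t2 : (0:ℝ) ≤ 1 - t^2 := by nlinarith [ht.1, ht.2]
    have h1pt : (0:ℝ) ≤ 1 + t := by linarith [ht.1]
    -- (1-t)^2 K ≤ 4 + (1-t^2) * 4n ≤ 4 n (1-t) + 8 n (1-t) = 12 n (1-t)
    have hsum2 : (1 - t^2) * ∑ m ∈ range n, ((1-t) * ∑ k ∈ range m, t ^ k) ^ 2
        ≤ (1 - t^2) * ((n:ℝ) * 4) := by
      exact mul_le_mul_of_nonneg_left hsum h1t2
    have hb : (1 - t)^2 * (∑ i ∈ range n, ∑ j ∈ range n, t ^ ((i : ℤ) - (j : ℤ)).natAbs)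
        ≤ 12 * n * (1 - t) := by
      rw [key]
      have hn1 : (1:ℝ) ≤ (n:ℝ) * (1 - t) := hc.le
      nlinarith
    nlinarith [hb, mul_pos h1t' h1t']

lemma kv_tendsto {t : ℝ} (ht : t ∈ Set.Ioo (-1:ℝ) 1) :
    Tendsto (fun n : ℕ =>
        (∑ i ∈ range n, ∑ j ∈ range n, t ^ ((i : ℤ) - (j : ℤ)).natAbs) / n)
      atTop (𝓝 ((1 + t) / (1 - t))) := by
  have habs : |t| < 1 := abs_lt.mpr ⟨ht.1, ht.2⟩
  have hgeo : Tendsto (fun n : ℕ => ∑ k ∈ range n, t ^ k) atTop (𝓝 (1 - t)⁻¹) :=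
    (hasSum_geometric_of_abs_lt_one habs).tendsto_sum_nat
  have hsq : Tendsto (fun n : ℕ => (∑ k ∈ range n, t ^ k) ^ 2) atTop
      (𝓝 ((1 - t)⁻¹ ^ 2)) := hgeo.pow 2
  have hces : Tendsto (fun n : ℕ =>
      (n : ℝ)⁻¹ * ∑ m ∈ range n, (∑ k ∈ range m, t ^ k) ^ 2) atTop
      (𝓝 ((1 - t)⁻¹ ^ 2)) := hsq.cesaro
  have hzero : Tendsto (fun n : ℕ => (∑ k ∈ range n, t ^ k) ^ 2 * (n : ℝ)⁻¹) atTop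
      (𝓝 ((1 - t)⁻¹ ^ 2 * 0)) := by
    refine hsq.mul ?_
    simpa [one_div] using tendsto_one_div_atTop_nhds_zero_nat (𝕜 := ℝ)
  have hcomb := hzero.add (hces.const_mul (1 - t ^ 2))
  have hfun : ∀ n : ℕ,
      (∑ i ∈ range n, ∑ j ∈ range n, t ^ ((i : ℤ) - (j : ℤ)).natAbs) / n
        = (∑ k ∈ range n, t ^ k) ^ 2 * (n : ℝ)⁻¹
          + (1 - t ^ 2) * ((n : ℝ)⁻¹ * ∑ m ∈ range n, (∑ k ∈ range m, t ^ k) ^ 2) := by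
    intro n
    rw [kv_K_eq, div_eq_mul_inv]
    ring
  have hval : (1 - t)⁻¹ ^ 2 * 0 + (1 - t ^ 2) * (1 - t)⁻¹ ^ 2 = (1 + t) / (1 - t) := by
    have h1 : (1:ℝ) - t ≠ 0 := by linarith [ht.2]
    field_simp
    ring
  rw [← hval]
  exact hcomb.congr fun n => (hfun n).symm

lemma kv_liminf_ge {t : ℝ} (ht : t ∈ Set.Icc (-1:ℝ) 1) :
    (ENNReal.ofReal (1 - t))⁻¹ ≤
      (Filter.atTop.liminf fun n : ℕ => ENNReal.ofReal
        ((∑ i ∈ range n, ∑ j ∈ range n, t ^ ((i : ℤ) - (j : ℤ)).natAbs) / n)) + 1 := by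
  rcases eq_or_lt_of_le ht.2 with h1 | h1
  · -- t = 1
    subst h1
    have hlim : Tendsto (fun n : ℕ => ENNReal.ofReal
        ((∑ i ∈ range n, ∑ j ∈ range n, (1:ℝ) ^ ((i : ℤ) - (j : ℤ)).natAbs) / n))
        atTop (𝓝 ⊤) := by
      refine Tendsto.congr' ?_ ENNReal.tendsto_nat_nhds_top
      filter_upwards [Filter.eventually_ge_atTop 1] with n hn
      have hn' : (n : ℝ) ≠ 0 := Nat.cast_ne_zero.mpr (by omega)
      have hK : (∑ i ∈ range n, ∑ j ∈ range n, (1:ℝ) ^ ((i : ℤ) - (j : ℤ)).natAbs) / n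
          = (n : ℝ) := by
        simp only [one_pow, Finset.sum_const, Finset.card_range, nsmul_eq_mul, mul_one]
        field_simp
      rw [hK, ENNReal.ofReal_natCast]
    rw [hlim.liminf_eq]
    simp
  · -- t < 1
    have h1t : (0:ℝ) < 1 - t := by linarith
    rw [← ENNReal.ofReal_inv_of_pos h1t]
    have key : ENNReal.ofReal ((1 + t) / (1 - t)) ≤
        Filter.atTop.liminf fun n : ℕ => ENNReal.ofReal
          ((∑ i ∈ range n, ∑ j ∈ range n, t ^ ((i : ℤ) - (j : ℤ)).natAbs) / n) := by
      rcases eq_or_lt_of_le ht.1 with hm1 | hm1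
      · rw [← hm1]
        norm_num
      · have := (ENNReal.tendsto_ofReal (kv_tendsto ⟨hm1, h1⟩)).liminf_eq
        rw [this]
    refine le_trans ?_ (add_le_add_left key 1)
    have hnn : (0:ℝ) ≤ (1 + t) / (1 - t) := div_nonneg (by linarith [ht.1]) h1t.le
    rw [← ENNReal.ofReal_one, ← ENNReal.ofReal_add hnn zero_le_one]
    apply ENNReal.ofReal_le_ofReal
    rw [inv_eq_one_div, div_add' _ _ _ h1t.ne', div_le_div_iff₀ h1t h1t]
    nlinarith

lemma kv_abs_Icc_geom {t : ℝ} (ht : t ∈ Set.Icc (-1:ℝ) 1) (hlt : t < 1) (n : ℕ) :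
    |∑ k ∈ Icc 1 n, t ^ k| ≤ 2 * (1 - t)⁻¹ + 1 := by
  have h1t : (0:ℝ) < 1 - t := by linarith
  have hu := kv_u_sq n ht
  have hu' : |(1 - t) * ∑ k ∈ range n, t ^ k| ≤ 2 := by
    rw [abs_le]; constructor <;> nlinarith
  have hs : |∑ k ∈ range n, t ^ k| ≤ 2 * (1 - t)⁻¹ := by
    rw [abs_mul, abs_of_pos h1t] at hu'
    rw [← le_div_iff₀' h1t] at hu'
    rw [div_eq_mul_inv, mul_comm] at hu'
    linarith [hu']
  rw [kv_Icc_geom, abs_mul]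
  have ht1 : |t| ≤ 1 := abs_le.mpr ⟨ht.1, ht.2⟩
  have habs0 : (0:ℝ) ≤ |∑ k ∈ range n, t ^ k| := abs_nonneg _
  nlinarith

/-- Kipnis–Varadhan equivalences for a self-adjoint Markov operator `Q`
on `L²(π)` with spectral measure `ρ` of `f` (so `⟨f, Q^k f⟩ = ∫ t^k dρ(t)` and `ρ` lives
on `[-1,1]`). Here `E S_n²` is expressed, as usual, by
`∑_{i,j=1}^n ⟨f, Q^{|i-j|} f⟩`. The equivalent conditions are:
(a) boundedness of `∑_{k=1}^n ⟨f, Q^k f⟩`; (b) `sup_n E S_n²/n < ∞`;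
(c) `∫ (1-t)⁻¹ dρ(t) < ∞`. -/
theorem stmt_18 {S : Type*} [MeasurableSpace S] (π : Measure S) [IsProbabilityMeasure π]
    (Q : (S → ℝ) → (S → ℝ))
    (hQL2 : ∀ g : S → ℝ, MemLp g 2 π → MemLp (Q g) 2 π)
    (hcontr : ∀ g : S → ℝ, MemLp g 2 π → eLpNorm (Q g) 2 π ≤ eLpNorm g 2 π)
    (hsa : ∀ g h : S → ℝ, MemLp g 2 π → MemLp h 2 π →
      ∫ x, g x * Q h x ∂π = ∫ x, Q g x * h x ∂π)
    (f : S → ℝ) (hf : MemLp f 2 π) (hmean : ∫ x, f x ∂π = 0)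
    (ρ : Measure ℝ) [IsFiniteMeasure ρ] (hsupp : ρ (Set.Icc (-1 : ℝ) 1)ᶜ = 0)
    (hspec : ∀ k : ℕ, ∫ x, f x * (Q^[k] f) x ∂π = ∫ t, t ^ k ∂ρ) :
    ((∃ C : ℝ, ∀ n : ℕ, |∑ k ∈ Icc 1 n, ∫ x, f x * (Q^[k] f) x ∂π| ≤ C) ↔
      (∃ C : ℝ, ∀ n : ℕ, 1 ≤ n →
        (∑ i ∈ Icc 1 n, ∑ j ∈ Icc 1 n,
          ∫ x, f x * (Q^[((i : ℤ) - (j : ℤ)).natAbs] f) x ∂π) / (n : ℝ) ≤ C)) ∧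
    ((∃ C : ℝ, ∀ n : ℕ, 1 ≤ n →
        (∑ i ∈ Icc 1 n, ∑ j ∈ Icc 1 n,
          ∫ x, f x * (Q^[((i : ℤ) - (j : ℤ)).natAbs] f) x ∂π) / (n : ℝ) ≤ C) ↔
      ∫⁻ t, (ENNReal.ofReal (1 - t))⁻¹ ∂ρ < ⊤) := by
  set F : ℕ → ℝ := fun k => ∫ x, f x * (Q^[k] f) x ∂π with hFdef
  -- common facts
  have hae : ∀ᵐ t ∂ρ, t ∈ Set.Icc (-1:ℝ) 1 := by
    rw [ae_iff]
    simpa [Set.compl_def] using hsupp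
  have hmeas_pow : ∀ k : ℕ, Measurable fun t : ℝ => t ^ k := fun k =>
    measurable_id.pow_const k
  have hint_pow : ∀ k : ℕ, Integrable (fun t : ℝ => t ^ k) ρ := by
    intro k
    refine (integrable_const (1:ℝ)).mono' (hmeas_pow k).aestronglyMeasurable ?_
    filter_upwards [hae] with t ht
    rw [Real.norm_eq_abs, abs_pow]
    exact pow_le_one₀ (abs_nonneg t) (abs_le.mpr ⟨ht.1, ht.2⟩)
  have hKmeas : ∀ n : ℕ, Measurable fun t : ℝ =>
      ∑ i ∈ range n, ∑ j ∈ range n, t ^ ((i : ℤ) - (j : ℤ)).natAbs := by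
    intro n
    exact Finset.measurable_sum _ fun i _ => Finset.measurable_sum _ fun j _ => hmeas_pow _
  have hKint : ∀ n : ℕ, Integrable (fun t : ℝ =>
      ∑ i ∈ range n, ∑ j ∈ range n, t ^ ((i : ℤ) - (j : ℤ)).natAbs) ρ := by
    intro n
    exact integrable_finset_sum _ fun i _ => integrable_finset_sum _ fun j _ => hint_pow _
  have hB : ∀ n : ℕ, ∑ k ∈ Icc 1 n, F k = ∫ t, (∑ k ∈ Icc 1 n, t ^ k) ∂ρ := by
    intro n
    rw [integral_finset_sum _ fun k _ => hint_pow k]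
    exact Finset.sum_congr rfl fun k _ => hspec k
  have hV : ∀ n : ℕ, ∑ i ∈ Icc 1 n, ∑ j ∈ Icc 1 n, F ((i : ℤ) - (j : ℤ)).natAbs
      = ∫ t, (∑ i ∈ range n, ∑ j ∈ range n, t ^ ((i : ℤ) - (j : ℤ)).natAbs) ∂ρ := by
    intro n
    rw [kv_Icc_to_range F n,
      integral_finset_sum _ fun i _ => integrable_finset_sum _ fun j _ => hint_pow _]
    refine Finset.sum_congr rfl fun i _ => ?_
    rw [integral_finset_sum _ fun j _ => hint_pow _]
    exact Finset.sum_congr rfl fun j _ => hspec _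
  -- (a) → (b)
  have hab : (∃ C : ℝ, ∀ n : ℕ, |∑ k ∈ Icc 1 n, F k| ≤ C) →
      (∃ C : ℝ, ∀ n : ℕ, 1 ≤ n →
        (∑ i ∈ Icc 1 n, ∑ j ∈ Icc 1 n, F ((i : ℤ) - (j : ℤ)).natAbs) / (n : ℝ) ≤ C) := by
    rintro ⟨C, hC⟩
    refine ⟨|F 0| + 2 * C, fun n hn => ?_⟩
    have hn0 : (0:ℝ) < (n : ℝ) := by exact_mod_cast Nat.pos_of_ne_zero (by omega)
    rw [div_le_iff₀ hn0, kv_Icc_to_range F n, kv_closed F n]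
    have h2 : ∑ m ∈ range n, ∑ k ∈ Icc 1 m, F k ≤ (n : ℝ) * C := by
      calc ∑ m ∈ range n, ∑ k ∈ Icc 1 m, F k
          ≤ ∑ m ∈ range n, C := Finset.sum_le_sum fun m _ => (abs_le.mp (hC m)).2
        _ = (n : ℝ) * C := by simp [mul_comm]
    have h3 : (n : ℝ) * F 0 ≤ (n : ℝ) * |F 0| :=
      mul_le_mul_of_nonneg_left (le_abs_self _) hn0.le
    nlinarith
  -- (b) → (c)
  have hbc : (∃ C : ℝ, ∀ n : ℕ, 1 ≤ n →
        (∑ i ∈ Icc 1 n, ∑ j ∈ Icc 1 n, F ((i : ℤ) - (j : ℤ)).natAbs) / (n : ℝ) ≤ C) →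
      ∫⁻ t, (ENNReal.ofReal (1 - t))⁻¹ ∂ρ < ⊤ := by
    rintro ⟨C, hC⟩
    set G : ℕ → ℝ → ℝ≥0∞ := fun n t => ENNReal.ofReal
      ((∑ i ∈ range n, ∑ j ∈ range n, t ^ ((i : ℤ) - (j : ℤ)).natAbs) / n) with hGdef
    have hGmeas : ∀ n, Measurable (G n) := fun n =>
      ((hKmeas n).div_const _).ennreal_ofReal
    have hGle : ∀ n : ℕ, 1 ≤ n → ∫⁻ t, G n t ∂ρ ≤ ENNReal.ofReal C := by
      intro n hn
      have hint : Integrable (fun t : ℝ =>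
          (∑ i ∈ range n, ∑ j ∈ range n, t ^ ((i : ℤ) - (j : ℤ)).natAbs) / n) ρ :=
        (hKint n).div_const _
      have hnn : 0 ≤ᵐ[ρ] fun t : ℝ =>
          (∑ i ∈ range n, ∑ j ∈ range n, t ^ ((i : ℤ) - (j : ℤ)).natAbs) / n := by
        filter_upwards [hae] with t ht
        exact div_nonneg (kv_K_nonneg n ht) (Nat.cast_nonneg n)
      rw [hGdef]
      rw [← ofReal_integral_eq_lintegral_ofReal hint hnn]
      apply ENNReal.ofReal_le_ofReal
      rw [integral_div, ← hV n]
      exact hC n hn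
    have hfreq : liminf (fun n => ∫⁻ t, G n t ∂ρ) atTop ≤ ENNReal.ofReal C := by
      exact Filter.liminf_le_of_frequently_le ((eventually_atTop.mpr ⟨1, hGle⟩).frequently)
    have hfatou := lintegral_liminf_le hGmeas (μ := ρ) (u := atTop)
    have hptwise : ∫⁻ t, (ENNReal.ofReal (1 - t))⁻¹ ∂ρ
        ≤ ∫⁻ t, ((atTop.liminf fun n => G n t) + 1) ∂ρ := by
      refine lintegral_mono_ae ?_
      filter_upwards [hae] with t ht
      exact kv_liminf_ge ht
    calc ∫⁻ t, (ENNReal.ofReal (1 - t))⁻¹ ∂ρ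
        ≤ ∫⁻ t, ((atTop.liminf fun n => G n t) + 1) ∂ρ := hptwise
      _ = (∫⁻ t, (atTop.liminf fun n => G n t) ∂ρ) + ρ Set.univ := by
          rw [lintegral_add_right _ measurable_const, lintegral_one]
      _ ≤ ENNReal.ofReal C + ρ Set.univ := by
          exact add_le_add_left (le_trans hfatou hfreq) _
      _ < ⊤ := ENNReal.add_lt_top.mpr ⟨ENNReal.ofReal_lt_top, measure_lt_top ρ _⟩
  -- (c) → (a)
  have hca : ∫⁻ t, (ENNReal.ofReal (1 - t))⁻¹ ∂ρ < ⊤ →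
      (∃ C : ℝ, ∀ n : ℕ, |∑ k ∈ Icc 1 n, F k| ≤ C) := by
    intro hC
    have hmeasInv : Measurable fun t : ℝ => (ENNReal.ofReal (1 - t))⁻¹ :=
      ((measurable_const.sub measurable_id).ennreal_ofReal).inv
    have haelt : ∀ᵐ t ∂ρ, t < 1 := by
      filter_upwards [ae_lt_top hmeasInv hC.ne] with t ht
      by_contra h
      push_neg at h
      have h0 : ENNReal.ofReal (1 - t) = 0 := ENNReal.ofReal_eq_zero.mpr (by linarith)
      rw [h0, ENNReal.inv_zero] at ht
      exact absurd ht (lt_irrefl ⊤)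
    have hint_inv : Integrable (fun t : ℝ => (1 - t)⁻¹) ρ := by
      refine ⟨((measurable_const.sub measurable_id).inv).aestronglyMeasurable, ?_⟩
      rw [HasFiniteIntegral]
      have : ∫⁻ t, ‖(1 - t)⁻¹‖ₑ ∂ρ = ∫⁻ t, (ENNReal.ofReal (1 - t))⁻¹ ∂ρ := by
        refine lintegral_congr_ae ?_
        filter_upwards [haelt] with t ht
        have h1t : (0:ℝ) < 1 - t := by linarith
        rw [Real.enorm_eq_ofReal (inv_nonneg.mpr h1t.le), ENNReal.ofReal_inv_of_pos h1t]
      rw [this]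
      exact hC
    refine ⟨∫ t, (2 * (1 - t)⁻¹ + 1) ∂ρ, fun n => ?_⟩
    rw [hB n]
    calc |∫ t, (∑ k ∈ Icc 1 n, t ^ k) ∂ρ| ≤ ∫ t, |∑ k ∈ Icc 1 n, t ^ k| ∂ρ := by
          simpa [Real.norm_eq_abs] using
            norm_integral_le_integral_norm (fun t : ℝ => ∑ k ∈ Icc 1 n, t ^ k) (μ := ρ)
      _ ≤ ∫ t, (2 * (1 - t)⁻¹ + 1) ∂ρ := by
          refine integral_mono_ae (integrable_finset_sum _ fun k _ => hint_pow k).abs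
            ((hint_inv.const_mul 2).add (integrable_const 1)) ?_
          filter_upwards [hae, haelt] with t ht hlt
          exact kv_abs_Icc_geom ht hlt n
  exact ⟨⟨hab, fun hb => hca (hbc hb)⟩, ⟨hbc, fun hc => hab (hca hc)⟩⟩
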